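/- Let (I, e, d, D, N, θ, (τ_a)) be a Gauss-sum datum, let n be an integer coprime to N and ñ an integer with n·ñ ≡ 1 (mod N), and let (σ, γ, π) be a Galois symmetry of the datum for σ in which γ = 1 (so that τ₁ = √D). Write c := √D > 0 and assume in addition that σ(c) is a positive real number and that τ₋₁ = c. Then: (i) θ(π(e)) = 1; (ii) for every integer a, τ_{a·n} = σ(τ_a) · D / σ(D); and (iii) τ_n = τ_{−n} = c² / σ(c), which is a positive real number, so that τ_n / |τ_n| = 1. -/

import Mathlib

/-- **Gauss sums of Drinfeld centers** (Theorem 3.10 of the paper, abstracted).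
With a Gauss-sum datum and a Galois symmetry as in Theorem 3.5, in which `γ = 1`
(so that `τ 1 = √D`), writing `c = √D > 0` and assuming `σ c` is a positive real and
`τ (-1) = c`, one has: (i) `θ (g e) = 1`; (ii) `τ (a*n) = σ (τ a) * D / σ D` for every
integer `a`; and (iii) `τ n = τ (-n) = c² / σ c`, a positive real number, so that
`τ n / |τ n| = 1`. -/
theorem gauss_sum_of_center_galois
    {ι : Type*} [Fintype ι] (e : ι)
    (d : ι → ℝ) (hd : ∀ X, d X ≠ 0)
    (D : ℝ) (hD : D = ∑ X, (d X) ^ 2)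
    (N : ℕ) (hN : 1 ≤ N)
    (θ : ι → ℂ) (hθe : θ e = 1) (hθN : ∀ X, θ X ^ N = 1)
    (τ : ℤ → ℂ) (hτ : ∀ a : ℤ, τ a = ∑ X, θ X ^ a * ((d X : ℂ)) ^ 2)
    (n nt : ℤ) (hn : Int.gcd n N = 1) (hnt : (N : ℤ) ∣ (n * nt - 1))
    (σ : ℂ ≃+* ℂ)
    (hσ : σ (Complex.exp (2 * (Real.pi : ℂ) * Complex.I / N)) =
      Complex.exp (2 * (Real.pi : ℂ) * Complex.I * nt / N))
    (γ : ℂ) (hγ0 : γ ≠ 0) (hγ : γ ^ 3 * (Real.sqrt D : ℂ) = τ 1)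
    (g : ι ≃ ι)
    (hgd : ∀ X, σ (((d X : ℂ)) ^ 2 / (D : ℂ)) = ((d (g X) : ℂ)) ^ 2 / (D : ℂ))
    (hgθ : ∀ X, σ (σ (θ X / γ)) = θ (g X) / γ)
    (hγ1 : γ = 1)
    (c : ℝ) (hc : c = Real.sqrt D) (hcpos : 0 < c)
    (hσc : ∃ r : ℝ, 0 < r ∧ σ (c : ℂ) = (r : ℂ))
    (hτm1 : τ (-1) = (c : ℂ)) :
    θ (g e) = 1 ∧
    (∀ a : ℤ, τ (a * n) = σ (τ a) * (D : ℂ) / σ (D : ℂ)) ∧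
    (τ n = τ (-n) ∧ τ n = (c : ℂ) ^ 2 / σ (c : ℂ) ∧
      (∃ r : ℝ, 0 < r ∧ τ n = (r : ℂ)) ∧
      τ n / ((‖τ n‖ : ℝ) : ℂ) = 1) := by
  subst hγ1
  have hN0 : N ≠ 0 := by omega
  haveI : NeZero N := ⟨hN0⟩
  -- σ acts on N-th roots of unity by z ↦ z ^ nt
  set ζ : ℂ := Complex.exp (2 * (Real.pi : ℂ) * Complex.I / N) with hζdef
  have hζ : IsPrimitiveRoot ζ N := Complex.isPrimitiveRoot_exp N hN0
  have hσζ : σ ζ = ζ ^ nt := by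
    rw [hσ, hζdef, ← Complex.exp_int_mul]
    ring_nf
  have key : ∀ z : ℂ, z ^ N = 1 → σ z = z ^ nt := by
    intro z hz
    obtain ⟨k, _, rfl⟩ := hζ.eq_pow_of_pow_eq_one hz
    rw [map_pow, hσζ, ← zpow_natCast (ζ ^ nt) k, ← zpow_mul, mul_comm, zpow_mul,
      zpow_natCast]
  -- congruence trick
  have hzmod : ∀ z : ℂ, z ^ N = 1 → ∀ s t : ℤ, (N : ℤ) ∣ s - t → z ^ s = z ^ t := by
    intro z hz s t ⟨q, hq⟩
    have hz0 : z ≠ 0 := by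
      intro h; rw [h, zero_pow hN0] at hz; exact zero_ne_one hz
    have : s = t + N * q := by linarith [hq]
    rw [this, zpow_add₀ hz0, zpow_mul, zpow_natCast, hz, one_zpow, mul_one]
  have hθ0 : ∀ X, θ X ≠ 0 := by
    intro X h
    have := hθN X; rw [h, zero_pow hN0] at this; exact zero_ne_one this
  -- (i)
  have part1 : θ (g e) = 1 := by
    have h := hgθ e
    rw [hθe] at h
    simpa using h.symm
  -- positivity of D
  have hDpos : (0 : ℝ) < D := Real.sqrt_pos.mp (hc ▸ hcpos)
  have hDC : (D : ℂ) ≠ 0 := by exact_mod_cast hDpos.ne'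
  have hσD : σ (D : ℂ) ≠ 0 := by
    intro h; exact hDC (by simpa using σ.injective (h.trans (map_zero σ).symm))
  -- action on dims
  have hσd : ∀ X, σ (((d X : ℂ)) ^ 2) = ((d (g X) : ℂ)) ^ 2 * σ (D : ℂ) / (D : ℂ) := by
    intro X
    have h2 : ((d X : ℂ)) ^ 2 = ((d X : ℂ)) ^ 2 / (D : ℂ) * (D : ℂ) := by field_simp
    rw [h2, map_mul, hgd X]
    ring
  -- action on θ
  have hσθ : ∀ X, σ (θ X) = θ X ^ nt := fun X => key _ (hθN X)
  have hgθ' : ∀ X, θ (g X) = θ X ^ (nt * nt) := by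
    intro X
    have h := hgθ X
    rw [div_one, div_one] at h
    rw [← h, hσθ, map_zpow₀, hσθ, ← zpow_mul]
  -- (ii)
  have part2 : ∀ a : ℤ, τ (a * n) = σ (τ a) * (D : ℂ) / σ (D : ℂ) := by
    intro a
    rw [hτ a, map_sum, Finset.sum_mul, Finset.sum_div]
    rw [hτ (a * n), ← Equiv.sum_comp g (fun X => θ X ^ (a * n) * ((d X : ℂ)) ^ 2)]
    refine Finset.sum_congr rfl fun X _ => ?_
    rw [map_mul, map_zpow₀, hσθ, hσd, hgθ', ← zpow_mul, ← zpow_mul]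
    have hcong : θ X ^ (nt * nt * (a * n)) = θ X ^ (nt * a) := by
      apply hzmod _ (hθN X)
      have : nt * nt * (a * n) - nt * a = (nt * a) * (n * nt - 1) := by ring
      rw [this]
      exact Dvd.dvd.mul_left hnt _
    rw [hcong]
    field_simp
  -- (iii)
  have hcC : (c : ℂ) = (Real.sqrt D : ℂ) := by rw [hc]
  have hτ1 : τ 1 = (c : ℂ) := by rw [← hγ, one_pow, one_mul, hcC]
  obtain ⟨r, hrpos, hr⟩ := hσc
  have hr0 : (r : ℂ) ≠ 0 := by exact_mod_cast hrpos.ne'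
  have hc0 : (c : ℂ) ≠ 0 := by exact_mod_cast hcpos.ne'
  have hDc : (D : ℂ) = (c : ℂ) ^ 2 := by
    have : c ^ 2 = D := by rw [hc, Real.sq_sqrt hDpos.le]
    exact_mod_cast this.symm
  have hσDc : σ (D : ℂ) = (r : ℂ) ^ 2 := by rw [hDc, map_pow, hr]
  have hτn : τ n = (c : ℂ) ^ 2 / σ (c : ℂ) := by
    have h := part2 1
    rw [one_mul, hτ1, hr, hσDc, hDc] at h
    rw [h, hr]
    field_simp
  have hτmn : τ (-n) = (c : ℂ) ^ 2 / σ (c : ℂ) := by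
    have h := part2 (-1)
    rw [neg_one_mul, hτm1, hr, hσDc, hDc] at h
    rw [h, hr]
    field_simp
  have hτnr : τ n = ((c ^ 2 / r : ℝ) : ℂ) := by
    rw [hτn, hr]; push_cast; ring
  have hrr : (0 : ℝ) < c ^ 2 / r := by positivity
  refine ⟨part1, part2, hτn.trans hτmn.symm, hτn, ⟨c ^ 2 / r, hrr, hτnr⟩, ?_⟩
  rw [hτnr, Complex.norm_real, Real.norm_of_nonneg hrr.le, div_self]
  exact_mod_cast hrr.ne'
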